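/- Let π : L∞(F) → L∞(G) be regular with π(0) = 0 and let ξ' ≥ 0 in L¹(F). Define R(Y, ξ') := ess inf { π(ξ) : ξ ∈ L∞(F), E[ξ'ξ | G] ≥_μ Y } for Y ∈ L∞(G), where dμ/dP = ξ'. Then for all Y₁, Y₂ ∈ L∞(G) of the form Y_i = E[X_i ξ' | G]: (a) R(Y₁, ξ') ∧ R(Y₂, ξ') = R(Y₁ ∧ Y₂, ξ'), and (b) R(Y₁, ξ') ∨ R(Y₂, ξ') = R(Y₁ ∨ Y₂, ξ'). -/

import Mathlib

open MeasureTheory Filter Set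

noncomputable section

/-- `X` is a bounded `F`-measurable random variable (an element of `L∞(F)`). -/
def IsBddMeas {Ω : Type*} (F : MeasurableSpace Ω) (X : Ω → ℝ) : Prop :=
  Measurable[F] X ∧ ∃ C : ℝ, ∀ ω, |X ω| ≤ C

/-- Regularity (REG) of the conditional map `π` with respect to the
sub-σ-algebra `m`: `π (X 1_A + Y 1_{Aᶜ}) = π X 1_A + π Y 1_{Aᶜ}` a.s. -/
def Regular {Ω : Type*} (F m : MeasurableSpace Ω) (μ : @Measure Ω F)
    (π : (Ω → ℝ) → Ω → ℝ) : Prop :=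
  ∀ X Y : Ω → ℝ, IsBddMeas F X → IsBddMeas F Y → ∀ A : Set Ω, MeasurableSet[m] A →
    π (A.indicator X + Aᶜ.indicator Y) =ᵐ[μ] A.indicator (π X) + Aᶜ.indicator (π Y)

/-- `I` is an essential infimum (in the `μ`-a.e. pointwise order) of the set
`S` of random variables. -/
def IsEssInf {Ω : Type*} {F : MeasurableSpace Ω} (μ : @Measure Ω F)
    (S : Set (Ω → ℝ)) (I : Ω → ℝ) : Prop :=
  (∀ f ∈ S, I ≤ᵐ[μ] f) ∧ ∀ g : Ω → ℝ, (∀ f ∈ S, g ≤ᵐ[μ] f) → g ≤ᵐ[μ] I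

/-- `I` is an essential supremum (in the `μ`-a.e. pointwise order) of the set
`S` of random variables. -/
def IsEssSup {Ω : Type*} {F : MeasurableSpace Ω} (μ : @Measure Ω F)
    (S : Set (Ω → ℝ)) (I : Ω → ℝ) : Prop :=
  (∀ f ∈ S, f ≤ᵐ[μ] I) ∧ ∀ g : Ω → ℝ, (∀ f ∈ S, f ≤ᵐ[μ] g) → I ≤ᵐ[μ] g

lemma integrable_mul_bdd {Ω : Type*} {F : MeasurableSpace Ω} {μ : @Measure Ω F}
    {ξ' X : Ω → ℝ} (hξ'int : Integrable ξ' μ) (hX : IsBddMeas F X) :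
    Integrable (fun ω => ξ' ω * X ω) μ := by
  obtain ⟨hmeas, C, hC⟩ := hX
  have : Integrable (fun ω => X ω * ξ' ω) μ :=
    hξ'int.bdd_mul (c := C) hmeas.aestronglyMeasurable
      (Eventually.of_forall fun ω => by simpa using hC ω)
  exact this.congr (Eventually.of_forall fun ω => mul_comm _ _)

lemma ind_int {Ω : Type*} {F : MeasurableSpace Ω} {μ : @Measure Ω F} {f : Ω → ℝ} {s : Set Ω}
    (h : Integrable f μ) (hs : MeasurableSet[F] s) : Integrable (s.indicator f) μ :=
  h.indicator hs

lemma glue_aux {Ω : Type*} {F : MeasurableSpace Ω} (μ : @Measure Ω F) [IsProbabilityMeasure μ]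
    (m : MeasurableSpace Ω) (hm : m ≤ F)
    (π : (Ω → ℝ) → Ω → ℝ) (hreg : Regular F m μ π)
    (ξ' : Ω → ℝ) (hξ'int : Integrable ξ' μ)
    (A : Set Ω) (hA : MeasurableSet[m] A)
    (ξa ξb : Ω → ℝ) (ha : IsBddMeas F ξa) (hb : IsBddMeas F ξb)
    (Z : Ω → ℝ)
    (h1 : ∀ᵐ ω ∂(μ.withDensity fun ω => ENNReal.ofReal (ξ' ω)),
      ω ∈ A → Z ω ≤ (μ[fun ω => ξ' ω * ξa ω|m]) ω)
    (h2 : ∀ᵐ ω ∂(μ.withDensity fun ω => ENNReal.ofReal (ξ' ω)),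
      ω ∉ A → Z ω ≤ (μ[fun ω => ξ' ω * ξb ω|m]) ω) :
    ∃ ξ : Ω → ℝ, IsBddMeas F ξ ∧
      (Z ≤ᵐ[μ.withDensity fun ω => ENNReal.ofReal (ξ' ω)] μ[fun ω => ξ' ω * ξ ω|m]) ∧
      π ξ =ᵐ[μ] A.indicator (π ξa) + Aᶜ.indicator (π ξb) := by
  obtain ⟨hma, Ca, hCa⟩ := ha
  obtain ⟨hmb, Cb, hCb⟩ := hb
  have hae : ae (μ.withDensity fun ω => ENNReal.ofReal (ξ' ω)) ≤ ae μ :=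
    (withDensity_absolutelyContinuous μ _).ae_le
  refine ⟨A.indicator ξa + Aᶜ.indicator ξb, ⟨?_, max Ca Cb, ?_⟩, ?_, hreg _ _ ⟨hma, Ca, hCa⟩ ⟨hmb, Cb, hCb⟩ A hA⟩
  · exact (hma.indicator (hm _ hA)).add (hmb.indicator (hm _ hA).compl)
  · intro ω
    by_cases hω : ω ∈ A <;>
      simp [Set.indicator_apply, hω, le_max_iff, hCa ω, hCb ω]
  · have hinta : Integrable (fun ω => ξ' ω * ξa ω) μ := integrable_mul_bdd hξ'int ⟨hma, Ca, hCa⟩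
    have hintb : Integrable (fun ω => ξ' ω * ξb ω) μ := integrable_mul_bdd hξ'int ⟨hmb, Cb, hCb⟩
    have hfun : (fun ω => ξ' ω * (A.indicator ξa + Aᶜ.indicator ξb) ω)
        = A.indicator (fun ω => ξ' ω * ξa ω) + Aᶜ.indicator (fun ω => ξ' ω * ξb ω) := by
      funext ω
      by_cases hω : ω ∈ A <;> simp [Set.indicator_apply, hω]
    have hce : μ[fun ω => ξ' ω * (A.indicator ξa + Aᶜ.indicator ξb) ω|m]
        =ᵐ[μ] A.indicator (μ[fun ω => ξ' ω * ξa ω|m])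
          + Aᶜ.indicator (μ[fun ω => ξ' ω * ξb ω|m]) := by
      rw [hfun]
      refine (condExp_add (ind_int hinta (hm _ hA)) (ind_int hintb (hm _ hA.compl)) m).trans ?_
      exact EventuallyEq.add (condExp_indicator hinta hA) (condExp_indicator hintb hA.compl)
    filter_upwards [h1, h2, hae hce] with ω h1 h2 hce
    rw [hce]
    by_cases hω : ω ∈ A
    · simpa [Set.indicator_apply, hω] using h1 hω
    · simpa [Set.indicator_apply, hω] using h2 hω

/-- Lattice identities for `R(·, ξ')`:
`R(Y₁,ξ') ∧ R(Y₂,ξ') = R(Y₁ ∧ Y₂, ξ')` and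
`R(Y₁,ξ') ∨ R(Y₂,ξ') = R(Y₁ ∨ Y₂, ξ')`, for `Yᵢ = E[Xᵢ ξ'|G]` μ'-a.s. -/
theorem R_lattice_identities
    {Ω : Type*} [F : MeasurableSpace Ω] (μ : Measure Ω) [IsProbabilityMeasure μ]
    (m : MeasurableSpace Ω) (hm : m ≤ F)
    (π : (Ω → ℝ) → Ω → ℝ) (hreg : Regular F m μ π)
    (hπ0 : π 0 =ᵐ[μ] 0)
    (ξ' : Ω → ℝ) (hξ'pos : 0 ≤ ξ') (hξ'int : Integrable ξ' μ)
    (X₁ X₂ : Ω → ℝ) (hX₁ : IsBddMeas F X₁) (hX₂ : IsBddMeas F X₂)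
    (Y₁ Y₂ : Ω → ℝ) (hY₁m : Measurable[m] Y₁) (hY₂m : Measurable[m] Y₂)
    (hY₁ : Y₁ =ᵐ[μ.withDensity fun ω => ENNReal.ofReal (ξ' ω)]
      μ[fun ω => X₁ ω * ξ' ω|m])
    (hY₂ : Y₂ =ᵐ[μ.withDensity fun ω => ENNReal.ofReal (ξ' ω)]
      μ[fun ω => X₂ ω * ξ' ω|m])
    (R₁ R₂ Rmin Rmax : Ω → ℝ)
    (hR₁ : IsEssInf μ
      {g | ∃ ξ : Ω → ℝ, IsBddMeas F ξ ∧
        (Y₁ ≤ᵐ[μ.withDensity fun ω => ENNReal.ofReal (ξ' ω)]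
          μ[fun ω => ξ' ω * ξ ω|m]) ∧ g = π ξ} R₁)
    (hR₂ : IsEssInf μ
      {g | ∃ ξ : Ω → ℝ, IsBddMeas F ξ ∧
        (Y₂ ≤ᵐ[μ.withDensity fun ω => ENNReal.ofReal (ξ' ω)]
          μ[fun ω => ξ' ω * ξ ω|m]) ∧ g = π ξ} R₂)
    (hRmin : IsEssInf μ
      {g | ∃ ξ : Ω → ℝ, IsBddMeas F ξ ∧
        ((fun ω => min (Y₁ ω) (Y₂ ω)) ≤ᵐ[μ.withDensity fun ω => ENNReal.ofReal (ξ' ω)]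
          μ[fun ω => ξ' ω * ξ ω|m]) ∧ g = π ξ} Rmin)
    (hRmax : IsEssInf μ
      {g | ∃ ξ : Ω → ℝ, IsBddMeas F ξ ∧
        ((fun ω => max (Y₁ ω) (Y₂ ω)) ≤ᵐ[μ.withDensity fun ω => ENNReal.ofReal (ξ' ω)]
          μ[fun ω => ξ' ω * ξ ω|m]) ∧ g = π ξ} Rmax) :
    ((fun ω => min (R₁ ω) (R₂ ω)) =ᵐ[μ] Rmin) ∧
    ((fun ω => max (R₁ ω) (R₂ ω)) =ᵐ[μ] Rmax) := by
  classical
  have hcomm₁ : (fun ω => X₁ ω * ξ' ω) = fun ω => ξ' ω * X₁ ω := funext fun ω => mul_comm _ _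
  have hcomm₂ : (fun ω => X₂ ω * ξ' ω) = fun ω => ξ' ω * X₂ ω := funext fun ω => mul_comm _ _
  rw [hcomm₁] at hY₁
  rw [hcomm₂] at hY₂
  set ν := μ.withDensity fun ω => ENNReal.ofReal (ξ' ω) with hνdef
  have hae : ae ν ≤ ae μ := (withDensity_absolutelyContinuous μ _).ae_le
  set A : Set Ω := {ω | Y₁ ω ≤ Y₂ ω} with hAdef
  have hA : MeasurableSet[m] A := measurableSet_le hY₁m hY₂m
  constructor
  · -- min identity
    -- Rmin ≤ R₁, R₂
    have h1 : Rmin ≤ᵐ[μ] R₁ := by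
      refine hR₁.2 _ ?_
      rintro f ⟨ξ, hb, hle, rfl⟩
      refine hRmin.1 _ ⟨ξ, hb, ?_, rfl⟩
      filter_upwards [hle] with ω h
      exact (min_le_left _ _).trans h
    have h2 : Rmin ≤ᵐ[μ] R₂ := by
      refine hR₂.2 _ ?_
      rintro f ⟨ξ, hb, hle, rfl⟩
      refine hRmin.1 _ ⟨ξ, hb, ?_, rfl⟩
      filter_upwards [hle] with ω h
      exact (min_le_right _ _).trans h
    have hlow : ∀ f ∈ {g | ∃ ξ : Ω → ℝ, IsBddMeas F ξ ∧
        ((fun ω => min (Y₁ ω) (Y₂ ω)) ≤ᵐ[ν] μ[fun ω => ξ' ω * ξ ω|m]) ∧ g = π ξ},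
        (fun ω => min (R₁ ω) (R₂ ω)) ≤ᵐ[μ] f := by
      rintro f ⟨ξ, hbξ, hleξ, rfl⟩
      obtain ⟨ξ₁, hb₁, hle₁, heq₁⟩ := glue_aux μ m hm π hreg ξ' hξ'int A hA ξ X₁ hbξ hX₁ Y₁
        (by filter_upwards [hleξ] with ω h hωA
            exact (min_eq_left (show Y₁ ω ≤ Y₂ ω from hωA)).symm.le.trans h)
        (by filter_upwards [hY₁] with ω h _; exact le_of_eq h)
      obtain ⟨ξ₂, hb₂, hle₂, heq₂⟩ := glue_aux μ m hm π hreg ξ' hξ'int A hA X₂ ξ hX₂ hbξ Y₂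
        (by filter_upwards [hY₂] with ω h _; exact le_of_eq h)
        (by filter_upwards [hleξ] with ω h hωA
            exact (min_eq_right (le_of_lt (lt_of_not_ge
              (show ¬ Y₁ ω ≤ Y₂ ω from hωA)))).symm.le.trans h)
      have hR₁le : R₁ ≤ᵐ[μ] π ξ₁ := hR₁.1 _ ⟨ξ₁, hb₁, hle₁, rfl⟩
      have hR₂le : R₂ ≤ᵐ[μ] π ξ₂ := hR₂.1 _ ⟨ξ₂, hb₂, hle₂, rfl⟩
      filter_upwards [hR₁le, hR₂le, heq₁, heq₂] with ω hr1 hr2 he1 he2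
      by_cases hω : ω ∈ A
      · have : R₁ ω ≤ π ξ ω := by
          rw [he1] at hr1
          simpa [Set.indicator_apply, hω] using hr1
        exact (min_le_left _ _).trans this
      · have : R₂ ω ≤ π ξ ω := by
          rw [he2] at hr2
          simpa [Set.indicator_apply, hω] using hr2
        exact (min_le_right _ _).trans this
    have hle' : (fun ω => min (R₁ ω) (R₂ ω)) ≤ᵐ[μ] Rmin := hRmin.2 _ hlow
    have hge' : Rmin ≤ᵐ[μ] fun ω => min (R₁ ω) (R₂ ω) := by
      filter_upwards [h1, h2] with ω ha hb
      exact le_min ha hb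
    exact hle'.antisymm hge'
  · -- max identity
    have h1 : R₁ ≤ᵐ[μ] Rmax := by
      refine hRmax.2 _ ?_
      rintro f ⟨ξ, hb, hle, rfl⟩
      refine hR₁.1 _ ⟨ξ, hb, ?_, rfl⟩
      filter_upwards [hle] with ω h
      exact (le_max_left _ _).trans h
    have h2 : R₂ ≤ᵐ[μ] Rmax := by
      refine hRmax.2 _ ?_
      rintro f ⟨ξ, hb, hle, rfl⟩
      refine hR₂.1 _ ⟨ξ, hb, ?_, rfl⟩
      filter_upwards [hle] with ω h
      exact (le_max_right _ _).trans h
    -- a.e. on A, Rmax ≤ R₂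
    have hAclaim : ∀ᵐ ω ∂μ, ω ∈ A → Rmax ω ≤ R₂ ω := by
      have hg : (fun ω => if ω ∈ A then Rmax ω else R₂ ω) ≤ᵐ[μ] R₂ := by
        refine hR₂.2 _ ?_
        rintro f ⟨ξ₂, hb₂, hle₂, rfl⟩
        obtain ⟨ξg, hbg, hleg, heqg⟩ := glue_aux μ m hm π hreg ξ' hξ'int A hA ξ₂ X₁ hb₂ hX₁
          (fun ω => max (Y₁ ω) (Y₂ ω))
          (by filter_upwards [hle₂] with ω h hωA
              exact (max_eq_right (show Y₁ ω ≤ Y₂ ω from hωA)).le.trans h)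
          (by filter_upwards [hY₁] with ω h hωA
              exact (max_eq_left (le_of_lt (lt_of_not_ge
                (show ¬ Y₁ ω ≤ Y₂ ω from hωA)))).le.trans (le_of_eq h))
        have hRle : Rmax ≤ᵐ[μ] π ξg := hRmax.1 _ ⟨ξg, hbg, hleg, rfl⟩
        have hR₂le : R₂ ≤ᵐ[μ] π ξ₂ := hR₂.1 _ ⟨ξ₂, hb₂, hle₂, rfl⟩
        filter_upwards [hRle, hR₂le, heqg] with ω hr he2 heq
        by_cases hω : ω ∈ A
        · rw [heq] at hr
          simpa [Set.indicator_apply, hω] using hr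
        · simpa [hω] using he2
      filter_upwards [hg] with ω h hω
      simpa [hω] using h
    -- a.e. on Aᶜ, Rmax ≤ R₁
    have hAcclaim : ∀ᵐ ω ∂μ, ω ∉ A → Rmax ω ≤ R₁ ω := by
      have hg : (fun ω => if ω ∈ A then R₁ ω else Rmax ω) ≤ᵐ[μ] R₁ := by
        refine hR₁.2 _ ?_
        rintro f ⟨ξ₁, hb₁, hle₁, rfl⟩
        obtain ⟨ξg, hbg, hleg, heqg⟩ := glue_aux μ m hm π hreg ξ' hξ'int A hA X₂ ξ₁ hX₂ hb₁
          (fun ω => max (Y₁ ω) (Y₂ ω))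
          (by filter_upwards [hY₂] with ω h hωA
              exact (max_eq_right (show Y₁ ω ≤ Y₂ ω from hωA)).le.trans (le_of_eq h))
          (by filter_upwards [hle₁] with ω h hωA
              exact (max_eq_left (le_of_lt (lt_of_not_ge
                (show ¬ Y₁ ω ≤ Y₂ ω from hωA)))).le.trans h)
        have hRle : Rmax ≤ᵐ[μ] π ξg := hRmax.1 _ ⟨ξg, hbg, hleg, rfl⟩
        have hR₁le : R₁ ≤ᵐ[μ] π ξ₁ := hR₁.1 _ ⟨ξ₁, hb₁, hle₁, rfl⟩
        filter_upwards [hRle, hR₁le, heqg] with ω hr he1 heq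
        by_cases hω : ω ∈ A
        · simpa [hω] using he1
        · rw [heq] at hr
          simpa [Set.indicator_apply, hω] using hr
      filter_upwards [hg] with ω h hω
      simpa [hω] using h
    have hle' : Rmax ≤ᵐ[μ] fun ω => max (R₁ ω) (R₂ ω) := by
      filter_upwards [hAclaim, hAcclaim] with ω ha hb
      by_cases hω : ω ∈ A
      · exact (ha hω).trans (le_max_right _ _)
      · exact (hb hω).trans (le_max_left _ _)
    have hge' : (fun ω => max (R₁ ω) (R₂ ω)) ≤ᵐ[μ] Rmax := by
      filter_upwards [h1, h2] with ω ha hb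
      exact max_le ha hb
    exact hge'.antisymm hle'
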